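/- Let μ₁, μ₂ be probability measures on ℝ with finite second moments, with quantile (pseudo-inverse of the CDF) functions Y₁, Y₂ : (0,1) → ℝ. Then the 2-Wasserstein distance satisfies W₂²(μ₁,μ₂) = ∫₀¹ (Y₁(ω) - Y₂(ω))² dω. -/

import Mathlib

open Set MeasureTheory
open scoped ENNReal

/-- The squared 2-Wasserstein distance between two probability measures on `ℝ`,
defined as the infimum of the transport cost over all couplings. -/
noncomputable def W2sq (μ₁ μ₂ : Measure ℝ) : ℝ≥0∞ :=
  ⨅ (π : Measure (ℝ × ℝ)) (_ : π.map Prod.fst = μ₁) (_ : π.map Prod.snd = μ₂),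
    ∫⁻ p, ENNReal.ofReal ((p.1 - p.2) ^ 2) ∂π

/-- The pseudo-inverse (quantile function) of the CDF of a measure on `ℝ`:
`Y μ ω = inf {y : μ((-∞, y]) > ω}`. -/
noncomputable def quantileFun (μ : Measure ℝ) (ω : ℝ) : ℝ :=
  sInf {y : ℝ | ω < (μ (Iic y)).toReal}

namespace W2aux

/-- Real-valued CDF. -/
noncomputable def F (μ : Measure ℝ) (y : ℝ) : ℝ := (μ (Iic y)).toReal

variable {μ : Measure ℝ}

lemma F_nonneg (y : ℝ) : 0 ≤ F μ y := ENNReal.toReal_nonneg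

lemma F_mono [IsFiniteMeasure μ] : Monotone (F μ) := fun a b h =>
  ENNReal.toReal_mono (measure_ne_top _ _) (measure_mono (Iic_subset_Iic.2 h))

lemma F_le_one [IsProbabilityMeasure μ] (y : ℝ) : F μ y ≤ 1 := by
  have h : μ (Iic y) ≤ 1 := prob_le_one
  simpa [F] using ENNReal.toReal_mono ENNReal.one_ne_top h

lemma tendsto_F_atTop [IsProbabilityMeasure μ] :
    Filter.Tendsto (F μ) Filter.atTop (nhds 1) := by
  have h := tendsto_measure_Iic_atTop (μ := μ)
  rw [measure_univ] at h
  have := (ENNReal.tendsto_toReal ENNReal.one_ne_top).comp h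
  exact this

lemma tendsto_F_atBot [IsProbabilityMeasure μ] :
    Filter.Tendsto (F μ) Filter.atBot (nhds 0) := by
  have hI : (⋂ y : ℝ, Iic y) = (∅ : Set ℝ) := by
    ext x
    simp only [mem_iInter, mem_Iic, mem_empty_iff_false, iff_false, not_forall, not_le]
    exact ⟨x - 1, by linarith⟩
  have h := tendsto_measure_iInter_atBot (μ := μ) (s := fun y : ℝ => Iic y)
    (fun y => nullMeasurableSet_Iic) (fun a b hab => Iic_subset_Iic.2 hab)
    ⟨0, measure_ne_top _ _⟩
  rw [hI, measure_empty] at h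
  have := (ENNReal.tendsto_toReal (by simp)).comp h
  exact this

/-- The defining set of the quantile. -/
lemma quantile_set_nonempty [IsProbabilityMeasure μ] {ω : ℝ} (hω : ω < 1) :
    {y : ℝ | ω < F μ y}.Nonempty := by
  obtain ⟨y, hy⟩ := ((tendsto_order.1 (tendsto_F_atTop (μ := μ))).1 ω hω).exists
  exact ⟨y, hy⟩

lemma quantile_set_bddBelow [IsProbabilityMeasure μ] {ω : ℝ} (hω : 0 < ω) :
    BddBelow {y : ℝ | ω < F μ y} := by
  obtain ⟨y₀, hy₀⟩ := ((tendsto_order.1 (tendsto_F_atBot (μ := μ))).2 ω hω).exists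
  refine ⟨y₀, fun y hy => ?_⟩
  by_contra h
  push_neg at h
  have : F μ y ≤ F μ y₀ := F_mono h.le
  have hyω : ω < F μ y := hy
  linarith

lemma quantileFun_monotoneOn [IsProbabilityMeasure μ] :
    MonotoneOn (quantileFun μ) (Ioo (0:ℝ) 1) := by
  intro a ha b hb hab
  exact csInf_le_csInf (quantile_set_bddBelow ha.1)
    (quantile_set_nonempty hb.2)
    (fun y hy => lt_of_le_of_lt hab hy)

lemma quantileFun_le [IsProbabilityMeasure μ] {ω y : ℝ} (hω : 0 < ω)
    (h : ω < F μ y) : quantileFun μ ω ≤ y :=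
  csInf_le (quantile_set_bddBelow hω) h

lemma le_F_of_quantileFun_le [IsProbabilityMeasure μ] {ω y : ℝ} (hω : 0 < ω) (hω1 : ω < 1)
    (h : quantileFun μ ω ≤ y) : ω ≤ F μ y := by
  by_contra hc
  push_neg at hc
  -- right-continuity: μ (Iic y) = lim μ (Iic (y + 1/(n+1)))
  have hI : (⋂ n : ℕ, Iic (y + 1 / (n + 1))) = Iic y := by
    ext x
    simp only [mem_iInter, mem_Iic]
    constructor
    · intro hx
      by_contra hxy
      push_neg at hxy
      obtain ⟨n, hn⟩ := exists_nat_one_div_lt (sub_pos.2 hxy)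
      have := hx n
      have : x ≤ y + (x - y) := le_trans this (by linarith [hn])
      linarith [hn, hx n]
    · intro hx n
      have : (0:ℝ) < 1 / (n + 1) := by positivity
      linarith
  have htend : Filter.Tendsto (fun n : ℕ => μ (Iic (y + 1 / (n + 1)))) Filter.atTop
      (nhds (μ (Iic y))) := by
    have h := tendsto_measure_iInter_atTop (μ := μ)
      (s := fun n : ℕ => Iic (y + 1 / (n + 1)))
      (fun n => nullMeasurableSet_Iic)
      (fun a b hab => Iic_subset_Iic.2 (by
        have : (1:ℝ) / (b + 1) ≤ 1 / (a + 1) := by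
          apply one_div_le_one_div_of_le (by positivity)
          exact_mod_cast Nat.add_le_add_right hab 1
        linarith))
      ⟨0, measure_ne_top _ _⟩
    rwa [hI] at h
  have htendR : Filter.Tendsto (fun n : ℕ => F μ (y + 1 / (n + 1))) Filter.atTop
      (nhds (F μ y)) := by
    have := (ENNReal.tendsto_toReal (measure_ne_top μ _)).comp htend
    simpa [F, Function.comp_def] using this
  obtain ⟨n, hn⟩ := ((tendsto_order.1 htendR).2 ω hc).exists
  -- every element of the quantile set is > y + 1/(n+1)
  have hlb : y + 1 / (n + 1) ≤ quantileFun μ ω := by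
    apply le_csInf (quantile_set_nonempty hω1)
    intro b hb
    by_contra hby
    push_neg at hby
    exact absurd (lt_of_lt_of_le hb (F_mono hby.le)) (not_lt.2 hn.le)
  have hpos : (0:ℝ) < 1 / (n + 1) := by positivity
  linarith

lemma aemeasurable_quantileFun [IsProbabilityMeasure μ] :
    AEMeasurable (quantileFun μ) (volume.restrict (Ioo (0:ℝ) 1)) :=
  aemeasurable_restrict_of_monotoneOn measurableSet_Ioo quantileFun_monotoneOn

/-- The quantile function pushes uniform measure on (0,1) to μ. -/
lemma map_quantileFun [IsProbabilityMeasure μ] :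
    (volume.restrict (Ioo (0:ℝ) 1)).map (quantileFun μ) = μ := by
  have hmeas : AEMeasurable (quantileFun μ) (volume.restrict (Ioo (0:ℝ) 1)) :=
    aemeasurable_quantileFun
  haveI : IsProbabilityMeasure (volume.restrict (Ioo (0:ℝ) 1)) := by
    constructor
    simp [Real.volume_Ioo]
  haveI : IsProbabilityMeasure ((volume.restrict (Ioo (0:ℝ) 1)).map (quantileFun μ)) :=
    Measure.isProbabilityMeasure_map hmeas
  refine Measure.ext_of_Iic _ _ (fun y => ?_)
  rw [Measure.map_apply_of_aemeasurable hmeas measurableSet_Iic,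
    Measure.restrict_apply' measurableSet_Ioo]
  have hsub1 : Ioo (0:ℝ) (F μ y) ⊆ quantileFun μ ⁻¹' Iic y ∩ Ioo 0 1 := by
    intro ω hω
    have hω1 : ω < 1 := lt_of_lt_of_le hω.2 (F_le_one y)
    exact ⟨quantileFun_le hω.1 hω.2, hω.1, hω1⟩
  have hsub2 : quantileFun μ ⁻¹' Iic y ∩ Ioo 0 1 ⊆ Ioc (0:ℝ) (F μ y) := by
    intro ω hω
    exact ⟨hω.2.1, le_F_of_quantileFun_le hω.2.1 hω.2.2 hω.1⟩
  have h1 : volume (Ioo (0:ℝ) (F μ y)) = ENNReal.ofReal (F μ y) := by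
    rw [Real.volume_Ioo]; simp
  have h2 : volume (Ioc (0:ℝ) (F μ y)) = ENNReal.ofReal (F μ y) := by
    rw [Real.volume_Ioc]; simp
  have := le_antisymm (le_trans (measure_mono hsub2) h2.le)
    (le_trans h1.ge (measure_mono hsub1))
  rw [this, F, ENNReal.ofReal_toReal (measure_ne_top μ _)]



/-- Layer function: `chi a s = 1_{s < a} - 1_{s < 0}`. -/
noncomputable def chi (a s : ℝ) : ℝ :=
  (if s < a then 1 else 0) - (if s < 0 then 1 else 0)

lemma chi_eq_of_nonneg {a : ℝ} (ha : 0 ≤ a) :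
    chi a = (Ico (0:ℝ) a).indicator (fun _ => (1:ℝ)) := by
  funext s
  simp only [chi, indicator, mem_Ico]
  rcases lt_or_ge s 0 with h2 | h2
  · have h1 : s < a := lt_of_lt_of_le h2 ha
    simp [h1, h2, not_le.2 h2]
  · rcases lt_or_ge s a with h1 | h1
    · simp [h1, not_lt.2 h2, h2]
    · simp [not_lt.2 h1, not_lt.2 h2]

lemma chi_eq_of_neg {a : ℝ} (ha : a < 0) :
    chi a = fun s => -((Ico a 0).indicator (fun _ => (1:ℝ)) s) := by
  funext s
  simp only [chi, indicator, mem_Ico]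
  rcases lt_or_ge s a with h1 | h1
  · have h2 : s < 0 := lt_trans h1 ha
    simp [h1, h2, not_le.2 h1]
  · rcases lt_or_ge s 0 with h2 | h2
    · simp [not_lt.2 h1, h2, h1]
    · simp [not_lt.2 h2, not_lt.2 (le_trans ha.le h2), not_lt.2 (lt_of_lt_of_le ha h2).le]

lemma integrable_chi (a : ℝ) : Integrable (chi a) volume := by
  rcases le_or_gt 0 a with ha | ha
  · rw [chi_eq_of_nonneg ha]
    exact (integrable_indicator_iff measurableSet_Ico).2
      (integrableOn_const (by simp [Real.volume_Ico, ENNReal.ofReal_lt_top]))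
  · rw [chi_eq_of_neg ha]
    exact ((integrable_indicator_iff measurableSet_Ico).2
      (integrableOn_const (by simp [Real.volume_Ico, ENNReal.ofReal_lt_top]))).neg

lemma integral_chi (a : ℝ) : ∫ s, chi a s = a := by
  rcases le_or_gt 0 a with ha | ha
  · rw [chi_eq_of_nonneg ha, integral_indicator measurableSet_Ico, setIntegral_const,
      measureReal_def, Real.volume_Ico]
    simp [ENNReal.toReal_ofReal ha]
  · rw [chi_eq_of_neg ha]
    rw [integral_neg, integral_indicator measurableSet_Ico, setIntegral_const, measureReal_def, Real.volume_Ico,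
      zero_sub, ENNReal.toReal_ofReal (by linarith : (0:ℝ) ≤ -a)]
    simp

lemma integral_abs_chi (a : ℝ) : ∫ s, |chi a s| = |a| := by
  rcases le_or_gt 0 a with ha | ha
  · have h : (fun s => |chi a s|) = chi a := by
      funext s
      rw [chi_eq_of_nonneg ha]
      simp only [indicator]
      split_ifs <;> simp
    rw [h, integral_chi, abs_of_nonneg ha]
  · have h : (fun s => |chi a s|) = fun s => (Ico a 0).indicator (fun _ => (1:ℝ)) s := by
      funext s
      rw [chi_eq_of_neg ha]
      simp only [indicator]
      split_ifs <;> simp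
    rw [h, integral_indicator measurableSet_Ico, setIntegral_const, measureReal_def, Real.volume_Ico,
      zero_sub, ENNReal.toReal_ofReal (by linarith : (0:ℝ) ≤ -a), abs_of_neg ha]
    simp

lemma integrable_abs_chi (a : ℝ) : Integrable (fun s => |chi a s|) volume :=
  (integrable_chi a).abs

lemma measurable_chi_uncurry : Measurable (fun q : ℝ × ℝ => chi q.1 q.2) := by
  unfold chi
  exact Measurable.sub
    (Measurable.ite (measurableSet_lt measurable_snd measurable_fst)
      measurable_const measurable_const)
    (Measurable.ite (measurableSet_lt measurable_snd measurable_const)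
      measurable_const measurable_const)

section Coupling

variable {μ₁ μ₂ : Measure ℝ} [IsProbabilityMeasure μ₁] [IsProbabilityMeasure μ₂]
  {π : Measure (ℝ × ℝ)}

lemma coupling_prob (h1 : π.map Prod.fst = μ₁) : IsProbabilityMeasure π := by
  constructor
  have h : π univ = μ₁ univ := by
    rw [← h1, Measure.map_apply measurable_fst MeasurableSet.univ, preimage_univ]
  rw [h, measure_univ]

lemma integrable_sq (hm1 : ∫⁻ y, ENNReal.ofReal (y ^ 2) ∂μ₁ < ⊤) :
    Integrable (fun y : ℝ => y ^ 2) μ₁ := by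
  refine ⟨(measurable_id'.pow_const 2).aestronglyMeasurable, ?_⟩
  rw [HasFiniteIntegral]
  calc ∫⁻ y, ‖y ^ 2‖₊ ∂μ₁ = ∫⁻ y, ENNReal.ofReal (y ^ 2) ∂μ₁ := by
        refine lintegral_congr fun y => ?_
        rw [← enorm_eq_nnnorm, Real.enorm_eq_ofReal (sq_nonneg y)]
    _ < ⊤ := hm1

lemma coupling_integrable_fst_sq (h1 : π.map Prod.fst = μ₁)
    (hm1 : ∫⁻ y, ENNReal.ofReal (y ^ 2) ∂μ₁ < ⊤) :
    Integrable (fun p : ℝ × ℝ => p.1 ^ 2) π := by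
  have := (integrable_map_measure ((measurable_id'.pow_const 2).aestronglyMeasurable)
      measurable_fst.aemeasurable).1 (h1 ▸ integrable_sq hm1)
  simpa [Function.comp_def] using this

lemma coupling_integrable_snd_sq (h2 : π.map Prod.snd = μ₂)
    (hm2 : ∫⁻ y, ENNReal.ofReal (y ^ 2) ∂μ₂ < ⊤) :
    Integrable (fun p : ℝ × ℝ => p.2 ^ 2) π := by
  have := (integrable_map_measure ((measurable_id'.pow_const 2).aestronglyMeasurable)
      measurable_snd.aemeasurable).1 (h2 ▸ integrable_sq hm2)
  simpa [Function.comp_def] using this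

lemma coupling_integral_fst_sq (h1 : π.map Prod.fst = μ₁) :
    ∫ p : ℝ × ℝ, p.1 ^ 2 ∂π = ∫ y, y ^ 2 ∂μ₁ := by
  rw [← h1, integral_map measurable_fst.aemeasurable
    ((measurable_id'.pow_const 2).aestronglyMeasurable)]

lemma coupling_integral_snd_sq (h2 : π.map Prod.snd = μ₂) :
    ∫ p : ℝ × ℝ, p.2 ^ 2 ∂π = ∫ y, y ^ 2 ∂μ₂ := by
  rw [← h2, integral_map measurable_snd.aemeasurable
    ((measurable_id'.pow_const 2).aestronglyMeasurable)]

lemma coupling_integrable_mul (h1 : π.map Prod.fst = μ₁) (h2 : π.map Prod.snd = μ₂)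
    (hm1 : ∫⁻ y, ENNReal.ofReal (y ^ 2) ∂μ₁ < ⊤)
    (hm2 : ∫⁻ y, ENNReal.ofReal (y ^ 2) ∂μ₂ < ⊤) :
    Integrable (fun p : ℝ × ℝ => p.1 * p.2) π := by
  have hadd : Integrable (fun p : ℝ × ℝ => p.1 ^ 2 + p.2 ^ 2) π :=
    (coupling_integrable_fst_sq h1 hm1).add (coupling_integrable_snd_sq h2 hm2)
  have hg : Integrable (fun p : ℝ × ℝ => (1/2 : ℝ) * (p.1 ^ 2 + p.2 ^ 2)) π :=
    hadd.const_mul _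
  refine Integrable.mono' hg
    ((measurable_fst.mul measurable_snd).aestronglyMeasurable) ?_
  refine Filter.Eventually.of_forall fun p => ?_
  rw [Real.norm_eq_abs, abs_mul]
  nlinarith [sq_nonneg (|p.1| - |p.2|), sq_abs p.1, sq_abs p.2, abs_nonneg p.1, abs_nonneg p.2]

lemma coupling_integrable_cost (h1 : π.map Prod.fst = μ₁) (h2 : π.map Prod.snd = μ₂)
    (hm1 : ∫⁻ y, ENNReal.ofReal (y ^ 2) ∂μ₁ < ⊤)
    (hm2 : ∫⁻ y, ENNReal.ofReal (y ^ 2) ∂μ₂ < ⊤) :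
    Integrable (fun p : ℝ × ℝ => (p.1 - p.2) ^ 2) π := by
  have hadd : Integrable (fun p : ℝ × ℝ => p.1 ^ 2 + p.2 ^ 2) π :=
    (coupling_integrable_fst_sq h1 hm1).add (coupling_integrable_snd_sq h2 hm2)
  have hg : Integrable (fun p : ℝ × ℝ => (2 : ℝ) * (p.1 ^ 2 + p.2 ^ 2)) π :=
    hadd.const_mul _
  refine Integrable.mono' hg
    (((measurable_fst.sub measurable_snd).pow_const 2).aestronglyMeasurable) ?_
  refine Filter.Eventually.of_forall fun p => ?_
  rw [Real.norm_eq_abs, abs_of_nonneg (sq_nonneg _)]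
  nlinarith [sq_nonneg (p.1 + p.2)]

lemma coupling_cost_expand (h1 : π.map Prod.fst = μ₁) (h2 : π.map Prod.snd = μ₂)
    (hm1 : ∫⁻ y, ENNReal.ofReal (y ^ 2) ∂μ₁ < ⊤)
    (hm2 : ∫⁻ y, ENNReal.ofReal (y ^ 2) ∂μ₂ < ⊤) :
    ∫ p : ℝ × ℝ, (p.1 - p.2) ^ 2 ∂π
      = (∫ y, y ^ 2 ∂μ₁) + (∫ y, y ^ 2 ∂μ₂) - 2 * ∫ p : ℝ × ℝ, p.1 * p.2 ∂π := by
  have hexp : (fun p : ℝ × ℝ => (p.1 - p.2) ^ 2)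
      = fun p : ℝ × ℝ => p.1 ^ 2 + p.2 ^ 2 - 2 * (p.1 * p.2) := by
    funext p; ring
  have hadd : Integrable (fun p : ℝ × ℝ => p.1 ^ 2 + p.2 ^ 2) π :=
    (coupling_integrable_fst_sq h1 hm1).add (coupling_integrable_snd_sq h2 hm2)
  have hmul2 : Integrable (fun p : ℝ × ℝ => (2:ℝ) * (p.1 * p.2)) π :=
    (coupling_integrable_mul h1 h2 hm1 hm2).const_mul 2
  rw [hexp, integral_sub hadd hmul2,
    integral_add (coupling_integrable_fst_sq h1 hm1) (coupling_integrable_snd_sq h2 hm2),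
    integral_const_mul, coupling_integral_fst_sq h1, coupling_integral_snd_sq h2]

/-- The value of the layered integrand against a coupling. -/
lemma coupling_layer_integral (h1 : π.map Prod.fst = μ₁) (h2 : π.map Prod.snd = μ₂)
    (s t : ℝ) :
    ∫ p : ℝ × ℝ, chi p.1 s * chi p.2 t ∂π
      = (π (Ioi s ×ˢ Ioi t)).toReal
        - (if s < 0 then (1:ℝ) else 0) * (μ₂ (Ioi t)).toReal
        - (if t < 0 then (1:ℝ) else 0) * (μ₁ (Ioi s)).toReal
        + (if s < 0 then (1:ℝ) else 0) * (if t < 0 then (1:ℝ) else 0) := by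
  haveI : IsProbabilityMeasure π := coupling_prob h1
  set a : ℝ := if s < 0 then (1:ℝ) else 0 with ha
  set b : ℝ := if t < 0 then (1:ℝ) else 0 with hb
  have hU : Measurable (fun p : ℝ × ℝ => if s < p.1 then (1:ℝ) else 0) :=
    Measurable.ite (measurableSet_lt measurable_const measurable_fst)
      measurable_const measurable_const
  have hV : Measurable (fun p : ℝ × ℝ => if t < p.2 then (1:ℝ) else 0) :=
    Measurable.ite (measurableSet_lt measurable_const measurable_snd)
      measurable_const measurable_const
  have hmR : MeasurableSet (Ioi s ×ˢ Ioi t : Set (ℝ × ℝ)) :=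
    measurableSet_Ioi.prod measurableSet_Ioi
  have hbdd : ∀ (f : ℝ × ℝ → ℝ), Measurable f → (∀ p, |f p| ≤ 1) → Integrable f π := by
    intro f hf hb
    refine Integrable.mono' (integrable_const (1:ℝ)) hf.aestronglyMeasurable ?_
    exact Filter.Eventually.of_forall fun p => by simpa [Real.norm_eq_abs] using hb p
  have hIU : Integrable (fun p : ℝ × ℝ => if s < p.1 then (1:ℝ) else 0) π :=
    hbdd _ hU fun p => by split_ifs <;> simp
  have hIV : Integrable (fun p : ℝ × ℝ => if t < p.2 then (1:ℝ) else 0) π :=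
    hbdd _ hV fun p => by split_ifs <;> simp
  have hIUV : Integrable (fun p : ℝ × ℝ =>
      (if s < p.1 then (1:ℝ) else 0) * (if t < p.2 then (1:ℝ) else 0)) π :=
    hbdd _ (hU.mul hV) fun p => by split_ifs <;> simp
  have hexp : (fun p : ℝ × ℝ => chi p.1 s * chi p.2 t)
      = fun p : ℝ × ℝ =>
          ((if s < p.1 then (1:ℝ) else 0) * (if t < p.2 then (1:ℝ) else 0)
            - a * (if t < p.2 then (1:ℝ) else 0))
          - (b * (if s < p.1 then (1:ℝ) else 0) - a * b) := by
    funext p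
    simp only [chi, ha, hb]
    ring
  have hInt1 : Integrable (fun p : ℝ × ℝ =>
      (if s < p.1 then (1:ℝ) else 0) * (if t < p.2 then (1:ℝ) else 0)
        - a * (if t < p.2 then (1:ℝ) else 0)) π :=
    hIUV.sub (hIV.const_mul a)
  have hInt2 : Integrable (fun p : ℝ × ℝ =>
      b * (if s < p.1 then (1:ℝ) else 0) - a * b) π :=
    (hIU.const_mul b).sub (integrable_const _)
  have hIVa : Integrable (fun p : ℝ × ℝ => a * (if t < p.2 then (1:ℝ) else 0)) π :=
    hIV.const_mul a
  have hIUb : Integrable (fun p : ℝ × ℝ => b * (if s < p.1 then (1:ℝ) else 0)) π :=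
    hIU.const_mul b
  rw [hexp, integral_sub hInt1 hInt2,
    integral_sub hIUV hIVa, integral_sub hIUb (integrable_const _),
    integral_const_mul, integral_const_mul, integral_const]
  have hUV : (fun p : ℝ × ℝ =>
      (if s < p.1 then (1:ℝ) else 0) * (if t < p.2 then (1:ℝ) else 0))
      = (Ioi s ×ˢ Ioi t : Set (ℝ × ℝ)).indicator (fun _ => (1:ℝ)) := by
    funext p
    by_cases hs' : s < p.1 <;> by_cases ht' : t < p.2 <;>
      simp [indicator, mem_prod, mem_Ioi, hs', ht']
  have hUe : (fun p : ℝ × ℝ => if s < p.1 then (1:ℝ) else 0)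
      = (Prod.fst ⁻¹' Ioi s : Set (ℝ × ℝ)).indicator (fun _ => (1:ℝ)) := by
    funext p
    simp only [indicator, mem_preimage, mem_Ioi]
  have hVe : (fun p : ℝ × ℝ => if t < p.2 then (1:ℝ) else 0)
      = (Prod.snd ⁻¹' Ioi t : Set (ℝ × ℝ)).indicator (fun _ => (1:ℝ)) := by
    funext p
    simp only [indicator, mem_preimage, mem_Ioi]
  rw [hUV, hUe, hVe, integral_indicator hmR, integral_indicator (measurable_fst measurableSet_Ioi),
    integral_indicator (measurable_snd measurableSet_Ioi), setIntegral_const, setIntegral_const,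
    setIntegral_const]
  have hfst : π (Prod.fst ⁻¹' Ioi s) = μ₁ (Ioi s) := by
    rw [← h1, Measure.map_apply measurable_fst measurableSet_Ioi]
  have hsnd : π (Prod.snd ⁻¹' Ioi t) = μ₂ (Ioi t) := by
    rw [← h2, Measure.map_apply measurable_snd measurableSet_Ioi]
  simp only [measureReal_def]
  rw [hfst, hsnd]
  simp [measure_univ]
  ring

/-- Fubini / layer-cake representation of the product moment for a coupling. -/
lemma coupling_mul_layer (h1 : π.map Prod.fst = μ₁) (h2 : π.map Prod.snd = μ₂)
    (hm1 : ∫⁻ y, ENNReal.ofReal (y ^ 2) ∂μ₁ < ⊤)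
    (hm2 : ∫⁻ y, ENNReal.ofReal (y ^ 2) ∂μ₂ < ⊤) :
    (∫ p : ℝ × ℝ, p.1 * p.2 ∂π
      = ∫ z : ℝ × ℝ, (∫ p : ℝ × ℝ, chi p.1 z.1 * chi p.2 z.2 ∂π) ∂(volume.prod volume))
    ∧ Integrable (fun z : ℝ × ℝ => ∫ p : ℝ × ℝ, chi p.1 z.1 * chi p.2 z.2 ∂π)
        (volume.prod volume) := by
  haveI : IsProbabilityMeasure π := coupling_prob h1
  set f : (ℝ × ℝ) → (ℝ × ℝ) → ℝ := fun p z => chi p.1 z.1 * chi p.2 z.2 with hf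
  have hmeasU : Measurable (Function.uncurry f) := by
    have h1m : Measurable (fun w : (ℝ × ℝ) × (ℝ × ℝ) => chi w.1.1 w.2.1) :=
      measurable_chi_uncurry.comp (measurable_fst.fst.prodMk measurable_snd.fst)
    have h2m : Measurable (fun w : (ℝ × ℝ) × (ℝ × ℝ) => chi w.1.2 w.2.2) :=
      measurable_chi_uncurry.comp (measurable_fst.snd.prodMk measurable_snd.snd)
    exact h1m.mul h2m
  have habs : (fun p : ℝ × ℝ =>
        ∫ z : ℝ × ℝ, ‖f p z‖ ∂(volume.prod volume)) = fun p => |p.1| * |p.2| := by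
    funext p
    have : (fun z : ℝ × ℝ => ‖f p z‖)
        = fun z : ℝ × ℝ => |chi p.1 z.1| * |chi p.2 z.2| := by
      funext z
      rw [hf]
      simp [Real.norm_eq_abs, abs_mul]
    rw [this, integral_prod_mul (fun u => |chi p.1 u|) (fun u => |chi p.2 u|),
      integral_abs_chi, integral_abs_chi]
  have hint : Integrable (Function.uncurry f) (π.prod (volume.prod volume)) := by
    refine (integrable_prod_iff hmeasU.aestronglyMeasurable).2 ⟨?_, ?_⟩
    · exact Filter.Eventually.of_forall fun p =>
        (integrable_chi p.1).mul_prod (integrable_chi p.2)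
    · simp only [Function.uncurry_apply_pair]
      rw [habs]
      have := (coupling_integrable_mul h1 h2 hm1 hm2).abs
      have heq : (fun p : ℝ × ℝ => |p.1 * p.2|) = fun p : ℝ × ℝ => |p.1| * |p.2| := by
        funext p; exact abs_mul _ _
      rwa [heq] at this
  constructor
  · calc ∫ p : ℝ × ℝ, p.1 * p.2 ∂π
        = ∫ p : ℝ × ℝ, (∫ z : ℝ × ℝ, f p z ∂(volume.prod volume)) ∂π := by
          refine integral_congr_ae (Filter.Eventually.of_forall fun p => ?_)
          show p.1 * p.2 = ∫ z : ℝ × ℝ, chi p.1 z.1 * chi p.2 z.2 ∂(volume.prod volume)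
          rw [integral_prod_mul (fun u => chi p.1 u) (fun u => chi p.2 u),
            integral_chi, integral_chi]
      _ = ∫ z : ℝ × ℝ, (∫ p : ℝ × ℝ, f p z ∂π) ∂(volume.prod volume) :=
          integral_integral_swap hint
  · exact hint.integral_prod_right

/-- The comonotone (quantile) coupling. -/
noncomputable def optCoupling (μ₁ μ₂ : Measure ℝ) : Measure (ℝ × ℝ) :=
  (volume.restrict (Ioo (0:ℝ) 1)).map
    (fun ω => (quantileFun μ₁ ω, quantileFun μ₂ ω))

lemma aemeasurable_pair : AEMeasurable (fun ω => (quantileFun μ₁ ω, quantileFun μ₂ ω))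
    (volume.restrict (Ioo (0:ℝ) 1)) :=
  (aemeasurable_quantileFun (μ := μ₁)).prodMk (aemeasurable_quantileFun (μ := μ₂))

lemma optCoupling_fst : (optCoupling μ₁ μ₂).map Prod.fst = μ₁ := by
  rw [optCoupling, AEMeasurable.map_map_of_aemeasurable measurable_fst.aemeasurable aemeasurable_pair]
  have : Prod.fst ∘ (fun ω => (quantileFun μ₁ ω, quantileFun μ₂ ω)) = quantileFun μ₁ := rfl
  rw [this, map_quantileFun]

lemma optCoupling_snd : (optCoupling μ₁ μ₂).map Prod.snd = μ₂ := by
  rw [optCoupling, AEMeasurable.map_map_of_aemeasurable measurable_snd.aemeasurable aemeasurable_pair]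
  have : Prod.snd ∘ (fun ω => (quantileFun μ₁ ω, quantileFun μ₂ ω)) = quantileFun μ₂ := rfl
  rw [this, map_quantileFun]

lemma toReal_Ioi (μ : Measure ℝ) [IsProbabilityMeasure μ] (s : ℝ) :
    (μ (Ioi s)).toReal = 1 - F μ s := by
  have hc : μ (Ioi s) = 1 - μ (Iic s) := by
    rw [← compl_Iic, measure_compl measurableSet_Iic (measure_ne_top μ _), measure_univ]
  rw [hc, ENNReal.toReal_sub_of_le prob_le_one ENNReal.one_ne_top, ENNReal.toReal_one, F]

/-- Any coupling gives smaller upper-tail box probability than the quantile coupling. -/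
lemma coupling_tail_le (h1 : π.map Prod.fst = μ₁) (h2 : π.map Prod.snd = μ₂) (s t : ℝ) :
    (π (Ioi s ×ˢ Ioi t)).toReal ≤ ((optCoupling μ₁ μ₂) (Ioi s ×ˢ Ioi t)).toReal := by
  haveI : IsProbabilityMeasure π := coupling_prob h1
  haveI : IsProbabilityMeasure (optCoupling μ₁ μ₂) :=
    coupling_prob (optCoupling_fst (μ₁ := μ₁) (μ₂ := μ₂))
  set M : ℝ := max (F μ₁ s) (F μ₂ t) with hM
  have hM0 : 0 ≤ M := le_trans (F_nonneg s) (le_max_left _ _)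
  have hM1 : M ≤ 1 := max_le (F_le_one s) (F_le_one t)
  -- upper bound for π
  have hup : (π (Ioi s ×ˢ Ioi t)).toReal ≤ 1 - M := by
    have hle1 : π (Ioi s ×ˢ Ioi t) ≤ μ₁ (Ioi s) := by
      rw [← h1, Measure.map_apply measurable_fst measurableSet_Ioi]
      exact measure_mono fun p hp => hp.1
    have hle2 : π (Ioi s ×ˢ Ioi t) ≤ μ₂ (Ioi t) := by
      rw [← h2, Measure.map_apply measurable_snd measurableSet_Ioi]
      exact measure_mono fun p hp => hp.2
    have t1 := ENNReal.toReal_mono (measure_ne_top μ₁ _) hle1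
    have t2 := ENNReal.toReal_mono (measure_ne_top μ₂ _) hle2
    rw [toReal_Ioi] at t1
    rw [toReal_Ioi] at t2
    rw [hM]
    rcases max_cases (F μ₁ s) (F μ₂ t) with ⟨hc, _⟩ | ⟨hc, _⟩ <;> rw [hc] <;> linarith
  -- lower bound for optCoupling
  have hlow : 1 - M ≤ ((optCoupling μ₁ μ₂) (Ioi s ×ˢ Ioi t)).toReal := by
    have hsub : Ioo M 1 ⊆ (fun ω => (quantileFun μ₁ ω, quantileFun μ₂ ω)) ⁻¹' (Ioi s ×ˢ Ioi t)
        ∩ Ioo (0:ℝ) 1 := by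
      intro ω hω
      have hω01 : ω ∈ Ioo (0:ℝ) 1 := ⟨lt_of_le_of_lt hM0 hω.1, hω.2⟩
      simp only [mem_inter_iff, mem_preimage, mem_prod, mem_Ioi]
      refine ⟨⟨?_, ?_⟩, hω01⟩
      · by_contra hc
        push_neg at hc
        have := le_F_of_quantileFun_le hω01.1 hω01.2 hc
        have : ω ≤ M := le_trans this (le_max_left _ _)
        exact absurd (lt_of_le_of_lt this hω.1) (lt_irrefl ω)
      · by_contra hc
        push_neg at hc
        have := le_F_of_quantileFun_le hω01.1 hω01.2 hc
        have : ω ≤ M := le_trans this (le_max_right _ _)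
        exact absurd (lt_of_le_of_lt this hω.1) (lt_irrefl ω)
    have hmeas : ENNReal.ofReal (1 - M) ≤ (optCoupling μ₁ μ₂) (Ioi s ×ˢ Ioi t) := by
      rw [optCoupling, Measure.map_apply_of_aemeasurable aemeasurable_pair
        (measurableSet_Ioi.prod measurableSet_Ioi),
        Measure.restrict_apply' measurableSet_Ioo]
      calc ENNReal.ofReal (1 - M) = volume (Ioo M 1) := by rw [Real.volume_Ioo]
        _ ≤ _ := measure_mono hsub
    have := ENNReal.toReal_mono (measure_ne_top _ _) hmeas
    rwa [ENNReal.toReal_ofReal (by linarith)] at this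
  linarith

/-- The product moment is maximized by the quantile coupling. -/
lemma coupling_mul_le (h1 : π.map Prod.fst = μ₁) (h2 : π.map Prod.snd = μ₂)
    (hm1 : ∫⁻ y, ENNReal.ofReal (y ^ 2) ∂μ₁ < ⊤)
    (hm2 : ∫⁻ y, ENNReal.ofReal (y ^ 2) ∂μ₂ < ⊤) :
    ∫ p : ℝ × ℝ, p.1 * p.2 ∂π ≤ ∫ p : ℝ × ℝ, p.1 * p.2 ∂(optCoupling μ₁ μ₂) := by
  obtain ⟨heq, hint⟩ := coupling_mul_layer h1 h2 hm1 hm2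
  obtain ⟨heq0, hint0⟩ := coupling_mul_layer (optCoupling_fst (μ₁ := μ₁) (μ₂ := μ₂))
    optCoupling_snd hm1 hm2
  rw [heq, heq0]
  refine integral_mono hint hint0 fun z => ?_
  rw [coupling_layer_integral h1 h2 z.1 z.2,
    coupling_layer_integral (optCoupling_fst (μ₁ := μ₁) (μ₂ := μ₂)) optCoupling_snd z.1 z.2]
  have := coupling_tail_le h1 h2 z.1 z.2
  linarith

/-- The real transport cost is minimized by the quantile coupling. -/
lemma coupling_cost_ge (h1 : π.map Prod.fst = μ₁) (h2 : π.map Prod.snd = μ₂)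
    (hm1 : ∫⁻ y, ENNReal.ofReal (y ^ 2) ∂μ₁ < ⊤)
    (hm2 : ∫⁻ y, ENNReal.ofReal (y ^ 2) ∂μ₂ < ⊤) :
    ∫ p : ℝ × ℝ, (p.1 - p.2) ^ 2 ∂(optCoupling μ₁ μ₂)
      ≤ ∫ p : ℝ × ℝ, (p.1 - p.2) ^ 2 ∂π := by
  rw [coupling_cost_expand h1 h2 hm1 hm2,
    coupling_cost_expand (optCoupling_fst (μ₁ := μ₁) (μ₂ := μ₂)) optCoupling_snd hm1 hm2]
  have := coupling_mul_le h1 h2 hm1 hm2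
  linarith

end Coupling

end W2aux

theorem W2sq_eq_integral_quantile_sub_sq
    (μ₁ μ₂ : Measure ℝ)
    [IsProbabilityMeasure μ₁] [IsProbabilityMeasure μ₂]
    (hm1 : ∫⁻ y, ENNReal.ofReal (y ^ 2) ∂μ₁ < ⊤)
    (hm2 : ∫⁻ y, ENNReal.ofReal (y ^ 2) ∂μ₂ < ⊤) :
    W2sq μ₁ μ₂ =
      ∫⁻ ω in Ioo (0 : ℝ) 1,
        ENNReal.ofReal ((quantileFun μ₁ ω - quantileFun μ₂ ω) ^ 2) := by
  set π₀ := W2aux.optCoupling μ₁ μ₂ with hπ₀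
  have hfst : π₀.map Prod.fst = μ₁ := W2aux.optCoupling_fst
  have hsnd : π₀.map Prod.snd = μ₂ := W2aux.optCoupling_snd
  haveI : IsProbabilityMeasure π₀ := W2aux.coupling_prob hfst
  have hcostmeas : Measurable (fun p : ℝ × ℝ => ENNReal.ofReal ((p.1 - p.2) ^ 2)) :=
    ENNReal.measurable_ofReal.comp ((measurable_fst.sub measurable_snd).pow_const 2)
  have hmap : ∫⁻ p, ENNReal.ofReal ((p.1 - p.2) ^ 2) ∂π₀
      = ∫⁻ ω in Ioo (0 : ℝ) 1,
          ENNReal.ofReal ((quantileFun μ₁ ω - quantileFun μ₂ ω) ^ 2) := by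
    rw [hπ₀, W2aux.optCoupling,
      lintegral_map' hcostmeas.aemeasurable W2aux.aemeasurable_pair]
  refine le_antisymm ?_ ?_
  · calc W2sq μ₁ μ₂ ≤ ∫⁻ p, ENNReal.ofReal ((p.1 - p.2) ^ 2) ∂π₀ :=
        iInf_le_of_le π₀ (iInf_le_of_le hfst (iInf_le_of_le hsnd le_rfl))
      _ = _ := hmap
  · refine le_iInf fun π => le_iInf fun h1 => le_iInf fun h2 => ?_
    haveI : IsProbabilityMeasure π := W2aux.coupling_prob h1
    have e1 : ∫⁻ p, ENNReal.ofReal ((p.1 - p.2) ^ 2) ∂π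
        = ENNReal.ofReal (∫ p : ℝ × ℝ, (p.1 - p.2) ^ 2 ∂π) :=
      (ofReal_integral_eq_lintegral_ofReal
        (W2aux.coupling_integrable_cost h1 h2 hm1 hm2)
        (Filter.Eventually.of_forall fun p => sq_nonneg _)).symm
    have e0 : ∫⁻ p, ENNReal.ofReal ((p.1 - p.2) ^ 2) ∂π₀
        = ENNReal.ofReal (∫ p : ℝ × ℝ, (p.1 - p.2) ^ 2 ∂π₀) :=
      (ofReal_integral_eq_lintegral_ofReal
        (W2aux.coupling_integrable_cost hfst hsnd hm1 hm2)
        (Filter.Eventually.of_forall fun p => sq_nonneg _)).symm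
    rw [← hmap, e1, e0]
    exact ENNReal.ofReal_le_ofReal (W2aux.coupling_cost_ge h1 h2 hm1 hm2)
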